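/- Let D ⊆ ℂ × ℂ be an open set, let (f_n) be a sequence of 𝕋-holomorphic functions on D, and suppose (f_n) converges uniformly on every compact subset of D to a function f : D → ℂ × ℂ. Then f is 𝕋-holomorphic on D. (Bicomplex Weierstrass theorem.) -/

import Mathlib

open Complex Metric Filter Set Topology

noncomputable def l1 : (ℂ × ℂ) →L[ℂ] ℂ :=
  ContinuousLinearMap.fst ℂ ℂ ℂ - Complex.I • ContinuousLinearMap.snd ℂ ℂ ℂ

noncomputable def l2 : (ℂ × ℂ) →L[ℂ] ℂ :=
  ContinuousLinearMap.fst ℂ ℂ ℂ + Complex.I • ContinuousLinearMap.snd ℂ ℂ ℂ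

lemma l1_apply (z : ℂ × ℂ) : l1 z = z.1 - Complex.I * z.2 := by
  simp [l1]

lemma l2_apply (z : ℂ × ℂ) : l2 z = z.1 + Complex.I * z.2 := by
  simp [l2]

lemma const_dir {G : ℂ × ℂ → ℂ} {V : Set (ℂ × ℂ)} (hV : IsOpen V) (hVc : Convex ℝ V)
    (hG : ∀ z ∈ V, DifferentiableAt ℂ G z) {d : ℂ × ℂ}
    (hd : ∀ z ∈ V, fderiv ℂ G z d = 0) {z z' : ℂ × ℂ} (hz : z ∈ V) (hz' : z' ∈ V)
    {t : ℂ} (ht : z' = z + t • d) : G z' = G z := by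
  set A : ℂ → ℂ × ℂ := fun s => z + s • d with hA
  set T : Set ℂ := A ⁻¹' V with hT
  have hAaff : ∃ Af : ℂ →ᵃ[ℝ] ℂ × ℂ, ∀ s, Af s = A s := by
    refine ⟨AffineMap.mk' A ((LinearMap.toSpanSingleton ℂ (ℂ × ℂ) d).restrictScalars ℝ) 0 ?_,
      fun s => rfl⟩
    intro p
    simp [hA, LinearMap.toSpanSingleton_apply]
    abel
  obtain ⟨Af, hAf⟩ := hAaff
  have hTo : IsOpen T := hV.preimage (by fun_prop)
  have hTc : Convex ℝ T := by
    have : T = Af ⁻¹' V := by ext s; simp [hT, hAf]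
    rw [this]; exact hVc.affine_preimage Af
  have key : ∀ s ∈ T, HasFDerivAt (G ∘ A) (0 : ℂ →L[ℂ] ℂ) s := by
    intro s hs
    have h1 : HasDerivAt A d s := by
      have h := ((hasDerivAt_id s).smul_const d).const_add z; rw [one_smul] at h; exact h
    have h2 : HasFDerivAt G (fderiv ℂ G (A s)) (A s) := (hG _ hs).hasFDerivAt
    have h3 : HasDerivAt (G ∘ A) (fderiv ℂ G (A s) d) s := h2.comp_hasDerivAt s h1
    rw [hd _ hs] at h3
    have h0 : (ContinuousLinearMap.smulRight (1 : ℂ →L[ℂ] ℂ) (0 : ℂ)) = 0 := ContinuousLinearMap.ext fun x => by simp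
    simpa [h0] using h3.hasFDerivAt
  have h01 : (0 : ℂ) ∈ T := by simp [hT, hA, hz]
  have h11 : t ∈ T := by simp [hT, hA, ← ht, hz']
  have := hTc.is_const_of_fderivWithin_eq_zero
    (fun s hs => (key s hs).differentiableAt.differentiableWithinAt)
    (fun s hs => by rw [fderivWithin_of_isOpen hTo hs]; exact (key s hs).fderiv) h11 h01
  simpa [hA, ← ht] using this



/-- A function `f = (f₁, f₂) : D → ℂ × ℂ` is 𝕋-holomorphic (bicomplex holomorphic) on an open
set `D ⊆ ℂ × ℂ` if it is holomorphic on `D` as a map of two complex variables and its components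
satisfy the complexified Cauchy–Riemann equations `∂f₁/∂z₁ = ∂f₂/∂z₂`, `∂f₂/∂z₁ = −∂f₁/∂z₂`. -/
def THolo (f : ℂ × ℂ → ℂ × ℂ) (U : Set (ℂ × ℂ)) : Prop :=
  DifferentiableOn ℂ f U ∧
  ∀ z ∈ U,
    fderiv ℂ (fun w => (f w).1) z (1, 0) = fderiv ℂ (fun w => (f w).2) z (0, 1) ∧
    fderiv ℂ (fun w => (f w).2) z (1, 0) = -(fderiv ℂ (fun w => (f w).1) z (0, 1))

/-- **Bicomplex Weierstrass theorem.** If a sequence of bicomplex holomorphic functions on an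
open set `D ⊆ ℂ × ℂ` converges uniformly on every compact subset of `D` to a function `f`,
then `f` is bicomplex holomorphic on `D`. -/
theorem stmt13 (D : Set (ℂ × ℂ)) (hD : IsOpen D)
    (f : ℂ × ℂ → ℂ × ℂ) (fs : ℕ → ℂ × ℂ → ℂ × ℂ)
    (hholo : ∀ n, THolo (fs n) D)
    (hconv : ∀ K : Set (ℂ × ℂ), K ⊆ D → IsCompact K →
      TendstoUniformlyOn fs f Filter.atTop K) :
    THolo f D := by
  have hfs1 : ∀ n, ∀ z ∈ D, DifferentiableAt ℂ (fs n) z := fun n z hz =>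
    (hholo n).1.differentiableAt (hD.mem_nhds hz)
  have hmain : ∀ z₀ ∈ D, DifferentiableAt ℂ f z₀ ∧
      (fderiv ℂ (fun w => (f w).1) z₀ (1, 0) = fderiv ℂ (fun w => (f w).2) z₀ (0, 1) ∧
       fderiv ℂ (fun w => (f w).2) z₀ (1, 0) = -(fderiv ℂ (fun w => (f w).1) z₀ (0, 1))) := by
    intro z₀ hz₀
    obtain ⟨r, hr0, hrD⟩ := Metric.isOpen_iff.mp hD z₀ hz₀
    set a : ℂ := l1 z₀ with ha
    set b : ℂ := l2 z₀ with hb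
    set r' : ℝ := r / 2 with hr'
    have hr'0 : 0 < r' := by positivity
    set V : Set (ℂ × ℂ) := l1 ⁻¹' ball a r' ∩ l2 ⁻¹' ball b r' with hV
    set Vc : Set (ℂ × ℂ) := l1 ⁻¹' closedBall a r' ∩ l2 ⁻¹' closedBall b r' with hVcdef
    have hVo : IsOpen V := (isOpen_ball.preimage l1.continuous).inter
      (isOpen_ball.preimage l2.continuous)
    have hVconv : Convex ℝ V := by
      apply Convex.inter
      · simpa using (convex_ball a r').linear_preimage
          ((l1.restrictScalars ℝ : (ℂ × ℂ) →L[ℝ] ℂ) : (ℂ × ℂ) →ₗ[ℝ] ℂ)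
      · simpa using (convex_ball b r').linear_preimage
          ((l2.restrictScalars ℝ : (ℂ × ℂ) →L[ℝ] ℂ) : (ℂ × ℂ) →ₗ[ℝ] ℂ)
    have hVVc : V ⊆ Vc := inter_subset_inter
      (preimage_mono ball_subset_closedBall) (preimage_mono ball_subset_closedBall)
    -- Vc is contained in the closed ball of radius r'
    have hVcBall : Vc ⊆ closedBall z₀ r' := by
      rintro z ⟨hz1, hz2⟩
      rw [mem_preimage, mem_closedBall, dist_eq_norm] at hz1 hz2
      have e1 : z.1 - z₀.1 = ((l1 z - a) + (l2 z - b)) / 2 := by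
        rw [l1_apply, l2_apply, ha, hb, l1_apply, l2_apply]; ring
      have e2 : z.2 - z₀.2 = (((l2 z - b) - (l1 z - a)) * (-Complex.I)) / 2 := by
        rw [l1_apply, l2_apply, ha, hb, l1_apply, l2_apply]
        linear_combination (z.2 - z₀.2) * Complex.I_sq
      rw [mem_closedBall, Prod.dist_eq]
      apply max_le
      · rw [dist_eq_norm, e1, norm_div]
        have := norm_add_le (l1 z - a) (l2 z - b)
        have h2 : ‖(2 : ℂ)‖ = 2 := by norm_num
        rw [h2]
        linarith [norm_add_le (l1 z - a) (l2 z - b)]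
      · rw [dist_eq_norm, e2, norm_div, norm_mul]
        have h2 : ‖(2 : ℂ)‖ = 2 := by norm_num
        have hI : ‖(-Complex.I : ℂ)‖ = 1 := by simp
        rw [h2, hI, mul_one]
        linarith [norm_sub_le (l2 z - b) (l1 z - a)]
    have hr'r : r' < r := by rw [hr']; linarith
    have hVcD : Vc ⊆ D := fun z hz =>
      hrD (mem_ball.mpr (lt_of_le_of_lt (mem_closedBall.mp (hVcBall hz)) hr'r))
    have hVcCompact : IsCompact Vc :=
      (isCompact_closedBall z₀ r').of_isClosed_subset
        ((Metric.isClosed_closedBall.preimage l1.continuous).inter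
          (Metric.isClosed_closedBall.preimage l2.continuous)) hVcBall
    have hz₀V : z₀ ∈ V := ⟨by simp [mem_ball, ha, hr'0], by simp [mem_ball, hb, hr'0]⟩
    -- the coordinate chart
    set Z : ℂ → ℂ → ℂ × ℂ := fun ξ η => ((ξ + η) / 2, (ξ - η) * Complex.I / 2) with hZ
    have hl1Z : ∀ ξ η, l1 (Z ξ η) = ξ := by
      intro ξ η
      rw [l1_apply]
      show (ξ + η) / 2 - Complex.I * ((ξ - η) * Complex.I / 2) = ξ
      linear_combination ((η - ξ) / 2) * Complex.I_sq
    have hl2Z : ∀ ξ η, l2 (Z ξ η) = η := by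
      intro ξ η
      rw [l2_apply]
      show (ξ + η) / 2 + Complex.I * ((ξ - η) * Complex.I / 2) = η
      linear_combination ((ξ - η) / 2) * Complex.I_sq
    have hZl : ∀ z : ℂ × ℂ, Z (l1 z) (l2 z) = z := by
      intro z
      rw [l1_apply, l2_apply]
      refine Prod.ext ?_ ?_
      · show (z.1 - Complex.I * z.2 + (z.1 + Complex.I * z.2)) / 2 = z.1
        ring
      · show (z.1 - Complex.I * z.2 - (z.1 + Complex.I * z.2)) * Complex.I / 2 = z.2
        linear_combination (-z.2) * Complex.I_sq
    -- membership facts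
    have hZVc1 : ∀ ξ ∈ closedBall a r', Z ξ b ∈ Vc := by
      intro ξ hξ
      refine ⟨?_, ?_⟩
      · rw [mem_preimage, hl1Z]; exact hξ
      · rw [mem_preimage, hl2Z]; exact mem_closedBall_self hr'0.le
    have hZVc2 : ∀ η ∈ closedBall b r', Z a η ∈ Vc := by
      intro η hη
      refine ⟨?_, ?_⟩
      · rw [mem_preimage, hl1Z]; exact mem_closedBall_self hr'0.le
      · rw [mem_preimage, hl2Z]; exact hη
    -- key directional derivative identities
    have key1 : ∀ n, ∀ z ∈ D,
        fderiv ℂ (fun w => (fs n w).1 - Complex.I * (fs n w).2) z (1, -Complex.I) = 0 := by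
      intro n z hz
      have hdf := hfs1 n z hz
      have h1 : DifferentiableAt ℂ (fun w => (fs n w).1) z := hdf.fst
      have h2 : DifferentiableAt ℂ (fun w => (fs n w).2) z := hdf.snd
      obtain ⟨cr1, cr2⟩ := (hholo n).2 z hz
      rw [fderiv_fun_sub h1 (h2.const_mul _), fderiv_const_mul h2]
      have ha' : ((1 : ℂ), -Complex.I) = ((1 : ℂ), (0 : ℂ)) + (-Complex.I) • ((0 : ℂ), (1 : ℂ)) := by
        simp
      rw [ha']
      simp only [ContinuousLinearMap.sub_apply, ContinuousLinearMap.smul_apply, map_add,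
        map_smul, smul_eq_mul]
      linear_combination cr1 - Complex.I * cr2 +
        (fderiv ℂ (fun w => (fs n w).2) z (0, 1)) * Complex.I_sq
    have key2 : ∀ n, ∀ z ∈ D,
        fderiv ℂ (fun w => (fs n w).1 + Complex.I * (fs n w).2) z (1, Complex.I) = 0 := by
      intro n z hz
      have hdf := hfs1 n z hz
      have h1 : DifferentiableAt ℂ (fun w => (fs n w).1) z := hdf.fst
      have h2 : DifferentiableAt ℂ (fun w => (fs n w).2) z := hdf.snd
      obtain ⟨cr1, cr2⟩ := (hholo n).2 z hz
      rw [fderiv_fun_add h1 (h2.const_mul _), fderiv_const_mul h2]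
      have ha' : ((1 : ℂ), Complex.I) = ((1 : ℂ), (0 : ℂ)) + Complex.I • ((0 : ℂ), (1 : ℂ)) := by
        simp
      rw [ha']
      simp only [ContinuousLinearMap.add_apply, ContinuousLinearMap.smul_apply, map_add,
        map_smul, smul_eq_mul]
      linear_combination cr1 + Complex.I * cr2 +
        (fderiv ℂ (fun w => (fs n w).2) z (0, 1)) * Complex.I_sq
    -- the sliced sequences
    set h1s : ℕ → ℂ → ℂ := fun n ξ => (fs n (Z ξ b)).1 - Complex.I * (fs n (Z ξ b)).2 with hh1s
    set h2s : ℕ → ℂ → ℂ := fun n η => (fs n (Z a η)).1 + Complex.I * (fs n (Z a η)).2 with hh2s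
    set h1 : ℂ → ℂ := fun ξ => (f (Z ξ b)).1 - Complex.I * (f (Z ξ b)).2 with hh1
    set h2 : ℂ → ℂ := fun η => (f (Z a η)).1 + Complex.I * (f (Z a η)).2 with hh2
    -- per-n slicing identities on V
    have idn1 : ∀ n, ∀ z ∈ V, (fs n z).1 - Complex.I * (fs n z).2 = h1s n (l1 z) := by
      intro n z hzV
      have hz'V : Z (l1 z) b ∈ V := by
        refine ⟨?_, ?_⟩
        · rw [mem_preimage, hl1Z]; exact hzV.1
        · rw [mem_preimage, hl2Z]; exact mem_ball_self hr'0
      have ht : Z (l1 z) b = z + ((b - l2 z) / 2) • ((1 : ℂ), -Complex.I) := by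
        rw [l1_apply, l2_apply]
        refine Prod.ext ?_ ?_
        · show (z.1 - Complex.I * z.2 + b) / 2 = z.1 + (b - (z.1 + Complex.I * z.2)) / 2 * 1
          ring
        · show (z.1 - Complex.I * z.2 - b) * Complex.I / 2 =
            z.2 + (b - (z.1 + Complex.I * z.2)) / 2 * (-Complex.I)
          linear_combination (-z.2) * Complex.I_sq
      have := const_dir hVo hVconv
        (fun w hw => ((hfs1 n w (hVcD (hVVc hw))).fst.sub
          ((hfs1 n w (hVcD (hVVc hw))).snd.const_mul Complex.I)))
        (fun w hw => key1 n w (hVcD (hVVc hw))) hzV hz'V ht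
      exact this.symm
    have idn2 : ∀ n, ∀ z ∈ V, (fs n z).1 + Complex.I * (fs n z).2 = h2s n (l2 z) := by
      intro n z hzV
      have hz'V : Z a (l2 z) ∈ V := by
        refine ⟨?_, ?_⟩
        · rw [mem_preimage, hl1Z]; exact mem_ball_self hr'0
        · rw [mem_preimage, hl2Z]; exact hzV.2
      have ht : Z a (l2 z) = z + ((a - l1 z) / 2) • ((1 : ℂ), Complex.I) := by
        rw [l1_apply, l2_apply]
        refine Prod.ext ?_ ?_
        · show (a + (z.1 + Complex.I * z.2)) / 2 = z.1 + (a - (z.1 - Complex.I * z.2)) / 2 * 1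
          ring
        · show (a - (z.1 + Complex.I * z.2)) * Complex.I / 2 =
            z.2 + (a - (z.1 - Complex.I * z.2)) / 2 * Complex.I
          linear_combination (-z.2) * Complex.I_sq
      have := const_dir hVo hVconv
        (fun w hw => ((hfs1 n w (hVcD (hVVc hw))).fst.add
          ((hfs1 n w (hVcD (hVVc hw))).snd.const_mul Complex.I)))
        (fun w hw => key2 n w (hVcD (hVVc hw))) hzV hz'V ht
      exact this.symm
    -- differentiability of the slices
    have hZdiff1 : ∀ ξ : ℂ, DifferentiableAt ℂ (fun ξ => Z ξ b) ξ := by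
      intro ξ
      simp only [hZ]
      fun_prop
    have hZdiff2 : ∀ η : ℂ, DifferentiableAt ℂ (fun η => Z a η) η := by
      intro η
      simp only [hZ]
      fun_prop
    have h1sdiff : ∀ n, DifferentiableOn ℂ (h1s n) (ball a r') := by
      intro n ξ hξ
      have hd : DifferentiableAt ℂ (fun ξ => fs n (Z ξ b)) ξ :=
        (hfs1 n _ (hVcD (hZVc1 ξ (ball_subset_closedBall hξ)))).comp ξ (hZdiff1 ξ)
      exact (hd.fst.sub (hd.snd.const_mul _)).differentiableWithinAt
    have h2sdiff : ∀ n, DifferentiableOn ℂ (h2s n) (ball b r') := by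
      intro n η hη
      have hd : DifferentiableAt ℂ (fun η => fs n (Z a η)) η :=
        (hfs1 n _ (hVcD (hZVc2 η (ball_subset_closedBall hη)))).comp η (hZdiff2 η)
      exact (hd.fst.add (hd.snd.const_mul _)).differentiableWithinAt
    -- uniform convergence of the slices
    have h1conv : TendstoUniformlyOn h1s h1 atTop (closedBall a r') := by
      have hK : IsCompact ((fun ξ => Z ξ b) '' closedBall a r') :=
        (isCompact_closedBall _ _).image (by simp only [hZ]; fun_prop)
      have hKD : (fun ξ => Z ξ b) '' closedBall a r' ⊆ D := by
        rintro _ ⟨ξ, hξ, rfl⟩; exact hVcD (hZVc1 ξ hξ)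
      have huc := ((hconv _ hKD hK).comp (fun ξ => Z ξ b)).mono
        (subset_preimage_image _ _)
      have hucl : UniformContinuous (fun p : ℂ × ℂ => p.1 - Complex.I * p.2) := by
        have : (fun p : ℂ × ℂ => p.1 - Complex.I * p.2) = ⇑l1 := by
          funext p; rw [l1_apply]
        rw [this]; exact l1.uniformContinuous
      exact hucl.comp_tendstoUniformlyOn huc
    have h2conv : TendstoUniformlyOn h2s h2 atTop (closedBall b r') := by
      have hK : IsCompact ((fun η => Z a η) '' closedBall b r') :=
        (isCompact_closedBall _ _).image (by simp only [hZ]; fun_prop)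
      have hKD : (fun η => Z a η) '' closedBall b r' ⊆ D := by
        rintro _ ⟨η, hη, rfl⟩; exact hVcD (hZVc2 η hη)
      have huc := ((hconv _ hKD hK).comp (fun η => Z a η)).mono
        (subset_preimage_image _ _)
      have hucl : UniformContinuous (fun p : ℂ × ℂ => p.1 + Complex.I * p.2) := by
        have : (fun p : ℂ × ℂ => p.1 + Complex.I * p.2) = ⇑l2 := by
          funext p; rw [l2_apply]
        rw [this]; exact l2.uniformContinuous
      exact hucl.comp_tendstoUniformlyOn huc
    -- Weierstrass in one variable
    have h1holo : DifferentiableOn ℂ h1 (ball a r') :=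
      ((h1conv.mono ball_subset_closedBall).tendstoLocallyUniformlyOn).differentiableOn
        (Eventually.of_forall h1sdiff) isOpen_ball
    have h2holo : DifferentiableOn ℂ h2 (ball b r') :=
      ((h2conv.mono ball_subset_closedBall).tendstoLocallyUniformlyOn).differentiableOn
        (Eventually.of_forall h2sdiff) isOpen_ball
    have h1da : DifferentiableAt ℂ h1 a :=
      h1holo.differentiableAt (isOpen_ball.mem_nhds (mem_ball_self hr'0))
    have h2da : DifferentiableAt ℂ h2 b :=
      h2holo.differentiableAt (isOpen_ball.mem_nhds (mem_ball_self hr'0))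
    -- pointwise identities for f on V
    have hfid1 : ∀ z ∈ V, (f z).1 - Complex.I * (f z).2 = h1 (l1 z) := by
      intro z hzV
      have hsing : TendstoUniformlyOn fs f atTop {z} :=
        hconv {z} (by simpa using hVcD (hVVc hzV)) isCompact_singleton
      have tz : Tendsto (fun n => fs n z) atTop (𝓝 (f z)) := hsing.tendsto_at rfl
      have t1 : Tendsto (fun n => (fs n z).1 - Complex.I * (fs n z).2) atTop
          (𝓝 ((f z).1 - Complex.I * (f z).2)) :=
        (((continuous_fst.tendsto (f z)).comp tz)).sub (((continuous_snd.tendsto (f z)).comp tz).const_mul _)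
      have t2 : Tendsto (fun n => h1s n (l1 z)) atTop (𝓝 (h1 (l1 z))) :=
        h1conv.tendsto_at (ball_subset_closedBall hzV.1)
      have he : (fun n => (fs n z).1 - Complex.I * (fs n z).2) = fun n => h1s n (l1 z) := by
        funext n; exact idn1 n z hzV
      rw [he] at t1
      exact tendsto_nhds_unique t1 t2
    have hfid2 : ∀ z ∈ V, (f z).1 + Complex.I * (f z).2 = h2 (l2 z) := by
      intro z hzV
      have hsing : TendstoUniformlyOn fs f atTop {z} :=
        hconv {z} (by simpa using hVcD (hVVc hzV)) isCompact_singleton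
      have tz : Tendsto (fun n => fs n z) atTop (𝓝 (f z)) := hsing.tendsto_at rfl
      have t1 : Tendsto (fun n => (fs n z).1 + Complex.I * (fs n z).2) atTop
          (𝓝 ((f z).1 + Complex.I * (f z).2)) :=
        (((continuous_fst.tendsto (f z)).comp tz)).add (((continuous_snd.tendsto (f z)).comp tz).const_mul _)
      have t2 : Tendsto (fun n => h2s n (l2 z)) atTop (𝓝 (h2 (l2 z))) :=
        h2conv.tendsto_at (ball_subset_closedBall hzV.2)
      have he : (fun n => (fs n z).1 + Complex.I * (fs n z).2) = fun n => h2s n (l2 z) := by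
        funext n; exact idn2 n z hzV
      rw [he] at t1
      exact tendsto_nhds_unique t1 t2
    -- the local model
    set F1 : ℂ × ℂ → ℂ := fun w => (2 : ℂ)⁻¹ * (h1 (l1 w) + h2 (l2 w)) with hF1
    set F2 : ℂ × ℂ → ℂ := fun w => (Complex.I / 2) * (h1 (l1 w) - h2 (l2 w)) with hF2
    have heq1 : ∀ z ∈ V, (f z).1 = F1 z := by
      intro z hzV
      have e1 := hfid1 z hzV
      have e2 := hfid2 z hzV
      simp only [hF1]
      linear_combination (e1 + e2) / 2
    have heq2 : ∀ z ∈ V, (f z).2 = F2 z := by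
      intro z hzV
      have e1 := hfid1 z hzV
      have e2 := hfid2 z hzV
      simp only [hF2]
      linear_combination (Complex.I / 2) * (e1 - e2) + (f z).2 * Complex.I_sq
    have hVnhds : V ∈ 𝓝 z₀ := hVo.mem_nhds hz₀V
    have hev1 : (fun w => (f w).1) =ᶠ[𝓝 z₀] F1 := eventually_of_mem hVnhds heq1
    have hev2 : (fun w => (f w).2) =ᶠ[𝓝 z₀] F2 := eventually_of_mem hVnhds heq2
    have hevf : f =ᶠ[𝓝 z₀] fun w => (F1 w, F2 w) := by
      filter_upwards [hVnhds] with w hw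
      exact Prod.ext (heq1 w hw) (heq2 w hw)
    -- derivatives of the model
    set c1 : ℂ := deriv h1 a with hc1
    set c2 : ℂ := deriv h2 b with hc2
    have H1 : HasFDerivAt (fun w => h1 (l1 w)) (c1 • l1) z₀ :=
      by have := (h1da.hasDerivAt).comp_hasFDerivAt z₀ l1.hasFDerivAt; exact this
    have H2 : HasFDerivAt (fun w => h2 (l2 w)) (c2 • l2) z₀ :=
      by have := (h2da.hasDerivAt).comp_hasFDerivAt z₀ l2.hasFDerivAt; exact this
    have HF1 : HasFDerivAt F1 ((2 : ℂ)⁻¹ • (c1 • l1 + c2 • l2)) z₀ :=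
      (H1.add H2).const_mul _
    have HF2 : HasFDerivAt F2 ((Complex.I / 2) • (c1 • l1 - c2 • l2)) z₀ :=
      (H1.sub H2).const_mul _
    have hdf : DifferentiableAt ℂ f z₀ :=
      (HF1.differentiableAt.prodMk HF2.differentiableAt).congr_of_eventuallyEq hevf
    refine ⟨hdf, ?_, ?_⟩
    · rw [hev1.fderiv_eq, hev2.fderiv_eq, HF1.fderiv, HF2.fderiv]
      simp only [ContinuousLinearMap.smul_apply, ContinuousLinearMap.add_apply,
        ContinuousLinearMap.sub_apply, l1_apply, l2_apply, smul_eq_mul]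
      linear_combination ((c1 + c2) / 2) * Complex.I_sq
    · rw [hev1.fderiv_eq, hev2.fderiv_eq, HF1.fderiv, HF2.fderiv]
      simp only [ContinuousLinearMap.smul_apply, ContinuousLinearMap.add_apply,
        ContinuousLinearMap.sub_apply, l1_apply, l2_apply, smul_eq_mul]
      ring
  exact ⟨fun z hz => (hmain z hz).1.differentiableWithinAt, fun z hz => (hmain z hz).2⟩
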